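/- Let M be a linear map on n×n complex matrices that is trace-preserving and positive (maps positive semidefinite matrices to positive semidefinite matrices). Then every eigenvalue λ of M (as a linear operator on the matrix space) satisfies |λ| ≤ 1. -/

import Mathlib

open scoped ComplexOrder

open Matrix

lemma psd_diag {n : ℕ} {P : Matrix (Fin n) (Fin n) ℂ} (hP : P.PosSemidef) (k : Fin n) :
    0 ≤ P k k := by
  have := hP.dotProduct_mulVec_nonneg (Pi.single k 1)
  simpa [dotProduct, Pi.single_apply, apply_ite] using this

lemma psd_quad {n : ℕ} {P : Matrix (Fin n) (Fin n) ℂ} (hP : P.PosSemidef) (i j : Fin n)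
    (c : ℂ) :
    0 ≤ P i i + c * P i j + star c * P j i + star c * c * P j j := by
  have := hP.dotProduct_mulVec_nonneg ((Pi.single i 1 : Fin n → ℂ) + c • (Pi.single j 1 : Fin n → ℂ))
  simp only [mulVec_add, mulVec_smul, star_add, star_smul, dotProduct_add, add_dotProduct,
    dotProduct_smul, smul_dotProduct] at this
  simp only [dotProduct, mulVec, Pi.single_apply, Pi.star_apply, star_one, star_zero,
    Finset.sum_ite_eq', Finset.mem_univ, if_true, mul_ite, ite_mul, one_mul, mul_one, zero_mul,
    mul_zero, Finset.sum_ite_eq, smul_eq_mul, apply_ite (star : ℂ → ℂ)] at this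
  convert this using 1; ring_nf

lemma psd_entry_le_trace {n : ℕ} {P : Matrix (Fin n) (Fin n) ℂ} (hP : P.PosSemidef)
    (i j : Fin n) : ‖P i j‖ ≤ P.trace.re := by
  have hd : ∀ k, 0 ≤ (P k k).re ∧ 0 = (P k k).im := fun k => Complex.nonneg_iff.mp (psd_diag hP k)
  have htr : P.trace.re = ∑ k, (P k k).re := by
    simp [Matrix.trace, Matrix.diag, Complex.re_sum]
  have htrnn : 0 ≤ P.trace.re := htr ▸ Finset.sum_nonneg fun k _ => (hd k).1
  by_cases hij : i = j
  · subst hij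
    have h1 : P i i = ((P i i).re : ℂ) := Complex.ext rfl (by simpa using (hd i).2.symm)
    rw [h1, Complex.norm_real, Real.norm_of_nonneg (hd i).1, htr]
    exact Finset.single_le_sum (fun k _ => (hd k).1) (Finset.mem_univ i)
  · by_cases h0 : P i j = 0
    · simp [h0, htrnn]
    · set z := P i j with hz
      set a := ‖z‖ with ha
      have hapos : (0:ℝ) < a := norm_pos_iff.mpr h0
      set c : ℂ := -(starRingEnd ℂ z) / a with hc
      have hji : P j i = starRingEnd ℂ z := by
        rw [hz, ← hP.1.apply i j]
        simp [conjTranspose_apply]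
      have hnormsq : (starRingEnd ℂ) z * z = ((a^2 : ℝ) : ℂ) := by
        rw [mul_comm, Complex.mul_conj]
        norm_cast
        exact (Complex.normSq_eq_norm_sq z)
      have hc1 : c * P i j = -(a : ℂ) := by
        rw [hc, ← hz]
        field_simp
        rw [hnormsq]
        push_cast
        ring
      have hc2 : star c * P j i = -(a : ℂ) := by
        rw [hji, hc]
        simp only [star_div₀, star_neg, RCLike.star_def, Complex.conj_conj, Complex.conj_ofReal]
        field_simp
        rw [mul_comm, hnormsq]
        push_cast
        ring
      have hc3 : star c * c * P j j = P j j := by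
        have : star c * c = 1 := by
          rw [hc]
          simp only [star_div₀, star_neg, RCLike.star_def, Complex.conj_conj, Complex.conj_ofReal]
          field_simp
          rw [mul_comm, hnormsq]
          push_cast
          ring
        rw [this, one_mul]
      have key := psd_quad hP i j c
      rw [hc1, hc2, hc3] at key
      have hre := (Complex.nonneg_iff.mp key).1
      simp only [Complex.add_re, Complex.neg_re, Complex.ofReal_re] at hre
      have hpair : (P i i).re + (P j j).re ≤ P.trace.re := by
        rw [htr]
        have hsub : ({i, j} : Finset (Fin n)) ⊆ Finset.univ := Finset.subset_univ _
        have := Finset.sum_le_sum_of_subset_of_nonneg hsub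
          (fun k _ _ => (hd k).1)
        simpa [Finset.sum_pair hij] using this
      linarith

lemma jordan_decomp {n : ℕ} {H : Matrix (Fin n) (Fin n) ℂ} (hH : H.IsHermitian) :
    ∃ P Q : Matrix (Fin n) (Fin n) ℂ, P.PosSemidef ∧ Q.PosSemidef ∧ H = P - Q := by
  classical
  set U : Matrix (Fin n) (Fin n) ℂ := (hH.eigenvectorUnitary : Matrix (Fin n) (Fin n) ℂ) with hU
  refine ⟨U * diagonal (fun i => ((max (hH.eigenvalues i) 0 : ℝ) : ℂ)) * Uᴴ,
          U * diagonal (fun i => ((max (-hH.eigenvalues i) 0 : ℝ) : ℂ)) * Uᴴ, ?_, ?_, ?_⟩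
  · exact (posSemidef_diagonal_iff.mpr fun i => by
      exact_mod_cast Complex.zero_le_real.mpr (le_max_right _ _)).mul_mul_conjTranspose_same U
  · exact (posSemidef_diagonal_iff.mpr fun i => by
      exact_mod_cast Complex.zero_le_real.mpr (le_max_right _ _)).mul_mul_conjTranspose_same U
  · have h1 : (star U : Matrix (Fin n) (Fin n) ℂ) = Uᴴ := rfl
    rw [← sub_mul, ← mul_sub, diagonal_sub]
    have h2 : (fun i => ((max (hH.eigenvalues i) 0 : ℝ) : ℂ) - ((max (-hH.eigenvalues i) 0 : ℝ) : ℂ)) =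
        (RCLike.ofReal ∘ hH.eigenvalues) := by
      funext i
      simp only [← Complex.ofReal_sub, max_zero_sub_max_neg_zero_eq_self]
      rfl
    rw [h2, ← h1]
    refine hH.spectral_theorem.trans ?_
    rw [Unitary.conjStarAlgAut_apply]


open Matrix in
/-- Every eigenvalue of a positive trace-preserving linear map on `n × n` complex
matrices lies in the closed unit disc. -/
theorem PTP_eigenvalues_in_unit_disc {n : ℕ}
    (M : Matrix (Fin n) (Fin n) ℂ →ₗ[ℂ] Matrix (Fin n) (Fin n) ℂ)
    (hpos : ∀ X : Matrix (Fin n) (Fin n) ℂ, X.PosSemidef → (M X).PosSemidef)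
    (htr : ∀ X : Matrix (Fin n) (Fin n) ℂ, (M X).trace = X.trace)
    (μ : ℂ) (X : Matrix (Fin n) (Fin n) ℂ) (hX : X ≠ 0) (hμ : M X = μ • X) :
    ‖μ‖ ≤ 1 := by
  classical
  have hpowX : ∀ k : ℕ, (M ^ k) X = μ ^ k • X := by
    intro k
    induction k with
    | zero => simp
    | succ k ih =>
        rw [pow_succ, Module.End.mul_apply, hμ, _root_.map_smul, ih, smul_smul, ← pow_succ']
  have hpowpos : ∀ (k : ℕ) (Y : Matrix (Fin n) (Fin n) ℂ), Y.PosSemidef →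
      ((M ^ k) Y).PosSemidef := by
    intro k
    induction k with
    | zero => intro Y hY; simpa using hY
    | succ k ih =>
        intro Y hY
        rw [pow_succ, Module.End.mul_apply]
        exact ih _ (hpos _ hY)
  have hpowtr : ∀ (k : ℕ) (Y : Matrix (Fin n) (Fin n) ℂ), ((M ^ k) Y).trace = Y.trace := by
    intro k
    induction k with
    | zero => intro Y; simp
    | succ k ih =>
        intro Y
        rw [pow_succ, Module.End.mul_apply, ih, htr]
  -- decompose X into Hermitian parts
  set A : Matrix (Fin n) (Fin n) ℂ := (1/2 : ℂ) • (X + Xᴴ) with hAdef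
  set K : Matrix (Fin n) (Fin n) ℂ := (-Complex.I/2) • (X - Xᴴ) with hKdef
  have hA : A.IsHermitian := by
    unfold A
    rw [Matrix.IsHermitian, conjTranspose_smul, conjTranspose_add, conjTranspose_conjTranspose]
    simp [add_comm]
  have hK : K.IsHermitian := by
    unfold K
    rw [Matrix.IsHermitian, conjTranspose_smul, conjTranspose_sub, conjTranspose_conjTranspose]
    rw [show star (-Complex.I/2 : ℂ) = Complex.I/2 by simp [star_div₀],
      ← neg_sub X Xᴴ, smul_neg, ← neg_smul, neg_div]
  have hXAK : X = A + Complex.I • K := by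
    unfold A K
    rw [smul_smul]
    rw [show Complex.I * (-Complex.I/2) = (1/2 : ℂ) by
      linear_combination (-1/2 : ℂ) * Complex.I_mul_I]
    module
  obtain ⟨P1, P2, hP1, hP2, hA12⟩ := jordan_decomp hA
  obtain ⟨P3, P4, hP3, hP4, hK34⟩ := jordan_decomp hK
  set C : ℝ := P1.trace.re + P2.trace.re + P3.trace.re + P4.trace.re with hCdef
  obtain ⟨i, j, hij0⟩ : ∃ i j, X i j ≠ 0 := by
    by_contra h
    push_neg at h
    exact hX (by ext i j; simp [h])
  have hbound : ∀ k : ℕ, ‖μ‖ ^ k * ‖X i j‖ ≤ C := by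
    intro k
    have h1 : (M ^ k) X = ((M ^ k) P1 - (M ^ k) P2)
        + Complex.I • ((M ^ k) P3 - (M ^ k) P4) := by
      rw [hXAK, hA12, hK34]
      simp only [map_add, map_sub, _root_.map_smul]
    have h2 : μ ^ k * X i j = (((M ^ k) P1) i j - ((M ^ k) P2) i j)
        + Complex.I * (((M ^ k) P3) i j - ((M ^ k) P4) i j) := by
      have := congrFun (congrFun ((hpowX k).symm.trans h1) i) j
      simpa [Matrix.smul_apply, smul_eq_mul] using this
    have habs : ∀ (Y : Matrix (Fin n) (Fin n) ℂ) (hY : Y.PosSemidef),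
        ‖((M ^ k) Y) i j‖ ≤ Y.trace.re := by
      intro Y hY
      have := psd_entry_le_trace (hpowpos k Y hY) i j
      rwa [hpowtr k Y] at this
    have tri : ∀ x y : ℂ, ‖x - y‖ ≤ ‖x‖ + ‖y‖ := fun x y => by
      simpa [sub_eq_add_neg] using norm_add_le x (-y)
    calc ‖μ‖ ^ k * ‖X i j‖ = ‖μ ^ k * X i j‖ := by
          rw [norm_mul, norm_pow]
      _ ≤ ‖((M ^ k) P1) i j‖ + ‖((M ^ k) P2) i j‖
          + (‖((M ^ k) P3) i j‖ + ‖((M ^ k) P4) i j‖) := by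
          rw [h2]
          refine le_trans (norm_add_le _ _) (add_le_add (tri _ _) ?_)
          rw [norm_mul, Complex.norm_I, one_mul]
          exact tri _ _
      _ ≤ C := by
          rw [hCdef]
          have := habs P1 hP1
          have := habs P2 hP2
          have := habs P3 hP3
          have := habs P4 hP4
          linarith
  by_contra hgt
  push_neg at hgt
  obtain ⟨k, hk⟩ := pow_unbounded_of_one_lt (C / ‖X i j‖) hgt
  have hb : (0:ℝ) < ‖X i j‖ := norm_pos_iff.mpr hij0
  have := hbound k
  rw [div_lt_iff₀ hb] at hk
  linarith
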